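/- Let f : ℝ^N → ℝ be differentiable with L-Lipschitz gradient (L > 0), Ψ : ℝ^N → ℝ convex, and F = f + Ψ. Let H be an N×N symmetric matrix with H ⪰ L·I, let x, p ∈ ℝ^N, define Q_H(p; x) = ⟨∇f(x), p⟩ + (1/2)⟨p, H p⟩ + Ψ(x + p) − Ψ(x), and suppose Q_H(p; x) ≤ 0. Then for every σ₁ ∈ (0,1], the trust-region sufficient decrease condition F(x + p) − F(x) ≤ σ₁ Q_H(p; x) holds. -/

import Mathlib

open scoped RealInnerProductSpace

/-- Descent lemma: if `∇f` is `L`-Lipschitz then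
`f (x + p) ≤ f x + ⟪∇f x, p⟫ + (L/2) ‖p‖²`. -/
lemma descent_lemma_aux {N : ℕ} (L : ℝ) (hL : 0 < L)
    (f : EuclideanSpace ℝ (Fin N) → ℝ) (hf : Differentiable ℝ f)
    (hlip : LipschitzWith (Real.toNNReal L) (fun z => gradient f z))
    (x p : EuclideanSpace ℝ (Fin N)) :
    f (x + p) ≤ f x + ⟪gradient f x, p⟫ + (L / 2) * ‖p‖ ^ 2 := by
  set g := fun z => gradient f z with hg
  have hderiv : ∀ t : ℝ, HasDerivAt (fun s : ℝ => f (x + s • p)) ⟪g (x + t • p), p⟫ t := by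
    intro t
    have h1 : HasGradientAt f (g (x + t • p)) (x + t • p) :=
      (hf (x + t • p)).hasGradientAt
    have h2 : HasFDerivAt f ((InnerProductSpace.toDual ℝ _) (g (x + t • p))) (x + t • p) :=
      hasGradientAt_iff_hasFDerivAt.mp h1
    have h3 : HasDerivAt (fun s : ℝ => x + s • p) p t := by
      simpa using ((hasDerivAt_id t).smul_const p).const_add x
    have := h2.comp_hasDerivAt t h3
    simp only [InnerProductSpace.toDual_apply_apply] at this; exact this
  have hcontg : Continuous g := hlip.continuous
  have hcont : Continuous fun t : ℝ => ⟪g (x + t • p), p⟫ := by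
    exact (hcontg.comp (continuous_const.add (continuous_id.smul continuous_const))).inner continuous_const
  have hint : f (x + p) - f x = ∫ t in (0:ℝ)..1, ⟪g (x + t • p), p⟫ := by
    have := intervalIntegral.integral_eq_sub_of_hasDerivAt
      (f := fun s : ℝ => f (x + s • p))
      (fun t _ => hderiv t) (hcont.intervalIntegrable 0 1)
    simpa using this.symm
  have hbound : ∀ t ∈ Set.Icc (0:ℝ) 1,
      ⟪g (x + t • p), p⟫ ≤ ⟪g x, p⟫ + L * t * ‖p‖ ^ 2 := by
    intro t ht
    have h1 : ⟪g (x + t • p) - g x, p⟫ ≤ ‖g (x + t • p) - g x‖ * ‖p‖ :=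
      real_inner_le_norm _ _
    have h2 : ‖g (x + t • p) - g x‖ ≤ L * (t * ‖p‖) := by
      have := hlip.dist_le_mul (x + t • p) x
      rw [dist_eq_norm] at this
      have hLn : (Real.toNNReal L : ℝ) = L := Real.coe_toNNReal L hL.le
      calc ‖g (x + t • p) - g x‖ ≤ (Real.toNNReal L : ℝ) * dist (x + t • p) x := by
            simpa [dist_eq_norm] using hlip.dist_le_mul (x + t • p) x
        _ = L * ‖t • p‖ := by rw [hLn, dist_eq_norm, add_sub_cancel_left]
        _ = L * (t * ‖p‖) := by rw [norm_smul, Real.norm_eq_abs, abs_of_nonneg ht.1]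
    have h3 : ⟪g (x + t • p), p⟫ = ⟪g x, p⟫ + ⟪g (x + t • p) - g x, p⟫ := by
      rw [inner_sub_left]; ring
    have h4 : ‖g (x + t • p) - g x‖ * ‖p‖ ≤ L * (t * ‖p‖) * ‖p‖ :=
      mul_le_mul_of_nonneg_right h2 (norm_nonneg _)
    rw [h3]
    nlinarith [h1, h4]
  have hmono : (∫ t in (0:ℝ)..1, ⟪g (x + t • p), p⟫)
      ≤ ∫ t in (0:ℝ)..1, (⟪g x, p⟫ + L * t * ‖p‖ ^ 2) := by
    apply intervalIntegral.integral_mono_on (by norm_num)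
      (hcont.intervalIntegrable 0 1)
      ((continuous_const.add ((continuous_const.mul continuous_id).mul continuous_const) : Continuous fun t : ℝ => ⟪g x, p⟫ + L * t * ‖p‖ ^ 2).intervalIntegrable 0 1)
    exact hbound
  have hval : (∫ t in (0:ℝ)..1, (⟪g x, p⟫ + L * t * ‖p‖ ^ 2))
      = ⟪g x, p⟫ + (L / 2) * ‖p‖ ^ 2 := by
    rw [intervalIntegral.integral_add (intervalIntegrable_const)
      (((intervalIntegral.intervalIntegrable_id).const_mul L).mul_const (‖p‖ ^ 2))]
    have h2 : (∫ t in (0:ℝ)..1, L * t * ‖p‖ ^ 2) = (L * (1 / 2)) * ‖p‖ ^ 2 := by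
      rw [intervalIntegral.integral_mul_const, intervalIntegral.integral_const_mul,
        integral_id]
      norm_num
    rw [h2]
    simp [intervalIntegral.integral_const]
    exact Or.inl (by ring)
  have := hint ▸ (hmono.trans_eq hval)
  linarith [this]

/-- ingredient of Lemma 3 of the paper: if `H ⪰ L·I` and the model
value `Q_H(p; x) ≤ 0`, then for every `σ₁ ∈ (0,1]` the trust-region sufficient decrease
condition `F(x + p) − F(x) ≤ σ₁ Q_H(p; x)` holds, where `F = f + Ψ`. -/
theorem trust_region_sufficient_decrease {N : ℕ} (L : ℝ) (hL : 0 < L)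
    (f : EuclideanSpace ℝ (Fin N) → ℝ) (hf : Differentiable ℝ f)
    (hlip : LipschitzWith (Real.toNNReal L) (fun z => gradient f z))
    (Ψ : EuclideanSpace ℝ (Fin N) → ℝ) (hΨ : ConvexOn ℝ Set.univ Ψ)
    (F : EuclideanSpace ℝ (Fin N) → ℝ) (hF : ∀ z, F z = f z + Ψ z)
    (H : EuclideanSpace ℝ (Fin N) →L[ℝ] EuclideanSpace ℝ (Fin N))
    (hHsymm : ∀ v w, ⟪H v, w⟫ = ⟪v, H w⟫)
    (hHlb : ∀ v, L * ‖v‖ ^ 2 ≤ ⟪v, H v⟫)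
    (x p : EuclideanSpace ℝ (Fin N))
    (hQnonpos : ⟪gradient f x, p⟫ + (1 / 2) * ⟪p, H p⟫ + Ψ (x + p) - Ψ x ≤ 0)
    (σ₁ : ℝ) (hσ₁ : 0 < σ₁) (hσ₁' : σ₁ ≤ 1) :
    F (x + p) - F x
      ≤ σ₁ * (⟪gradient f x, p⟫ + (1 / 2) * ⟪p, H p⟫ + Ψ (x + p) - Ψ x) := by
  have hdesc := descent_lemma_aux L hL f hf hlip x p
  have hHp : L * ‖p‖ ^ 2 ≤ ⟪p, H p⟫ := hHlb p
  set Q := ⟪gradient f x, p⟫ + (1 / 2) * ⟪p, H p⟫ + Ψ (x + p) - Ψ x with hQ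
  have h1 : F (x + p) - F x ≤ Q := by
    rw [hF, hF, hQ]
    linarith
  have h2 : Q ≤ σ₁ * Q := by nlinarith
  linarith
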